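/- Let h : (0,∞) → [0,∞) be integrable, H(x) := ∫_x^∞ h(x_*) dx_*, and suppose ∫₀^∞ h*h(x) dx < ∞ where h*h(x) = ∫₀^x h(x_*)h(x-x_*) dx_*. Then for every x₀ > 0, ∫_{x₀}^∞ (h*h)(x) dx = (h*H)(x₀) + (∫₀^∞ h) · H(x₀). -/

import Mathlib

open MeasureTheory Set Filter Real
open scoped Topology

theorem tail_of_selfconvolution
    (h : ℝ → ℝ) (hnonneg : ∀ x ∈ Ioi (0:ℝ), 0 ≤ h x)
    (hint : IntegrableOn h (Ioi 0))
    (hconvint : IntegrableOn (fun x => ∫ y in Ioo (0:ℝ) x, h y * h (x - y)) (Ioi 0))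
    (H : ℝ → ℝ) (hH : ∀ x, H x = ∫ y in Ioi x, h y) :
    ∀ x₀ ∈ Ioi (0:ℝ),
      (∫ x in Ioi x₀, ∫ y in Ioo (0:ℝ) x, h y * h (x - y))
        = (∫ y in Ioo (0:ℝ) x₀, h y * H (x₀ - y)) + (∫ x in Ioi (0:ℝ), h x) * H x₀ := by
  intro x₀ hx₀
  rw [mem_Ioi] at hx₀
  have hsm := hint.aestronglyMeasurable
  set g : ℝ → ℝ := (Ioi (0:ℝ)).indicator (fun x => max (hsm.mk h x) 0) with hg_def
  have hg_meas : Measurable g :=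
    (hsm.measurable_mk.max measurable_const).indicator measurableSet_Ioi
  have hg_nonneg : ∀ x, 0 ≤ g x := fun x =>
    indicator_nonneg (fun y _ => le_max_right _ _) x
  have hg_zero : ∀ x, x ∉ Ioi (0:ℝ) → g x = 0 := fun x hx =>
    indicator_of_notMem hx _
  have hg_eqh : g =ᵐ[volume.restrict (Ioi 0)] h := by
    filter_upwards [hsm.ae_eq_mk, ae_restrict_mem measurableSet_Ioi] with x hx1 hx2
    simp only [hg_def, indicator_of_mem hx2]
    rw [← hx1, max_eq_left (hnonneg x hx2)]
  have hg_int : Integrable g := by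
    rw [hg_def, integrable_indicator_iff measurableSet_Ioi]
    refine hint.congr ?_
    filter_upwards [hsm.ae_eq_mk, ae_restrict_mem measurableSet_Ioi] with x hx1 hx2
    rw [← hx1, max_eq_left (hnonneg x hx2)]
  have hae : ∀ᵐ u ∂(volume : Measure ℝ), u ∈ Ioi (0:ℝ) → g u = h u :=
    (ae_restrict_iff' measurableSet_Ioi).1 hg_eqh
  -- pulled-back a.e. statement
  have hmap : ∀ x : ℝ, ∀ᵐ y ∂(volume : Measure ℝ),
      (x - y ∈ Ioi (0:ℝ) → g (x - y) = h (x - y)) := by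
    intro x
    have hmp : MeasurePreserving (fun y : ℝ => x - y) volume volume :=
      Measure.measurePreserving_sub_left volume x
    rw [ae_iff] at hae ⊢
    exact hmp.quasiMeasurePreserving.preimage_null hae
  -- tail integral of g
  set G : ℝ → ℝ := fun t => ∫ u in Ioi t, g u with hG_def
  have hg_ind : (Ioi (0:ℝ)).indicator g = g :=
    indicator_eq_self.2 fun x hx => by_contra fun h0 => hx (hg_zero x h0)
  have hG_max : ∀ t : ℝ, G t = ∫ u in Ioi (max t 0), g u := by
    intro t
    rw [hG_def]
    simp only
    rw [← hg_ind, setIntegral_indicator measurableSet_Ioi, Ioi_inter_Ioi]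
    rw [hg_ind]
  have hG0 : ∀ t : ℝ, t ≤ 0 → G t = ∫ u in Ioi (0:ℝ), g u := by
    intro t ht
    rw [hG_max t, max_eq_right ht]
  have hGH : ∀ t : ℝ, 0 < t → G t = H t := by
    intro t ht
    rw [hH]
    exact setIntegral_congr_ae measurableSet_Ioi <|
      (ae_restrict_iff' measurableSet_Ioi).1
        (ae_restrict_of_ae_restrict_of_subset (Ioi_subset_Ioi ht.le) hg_eqh)
  have hC : (∫ u in Ioi (0:ℝ), g u) = ∫ x in Ioi (0:ℝ), h x :=
    integral_congr_ae hg_eqh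
  have hG_nonneg : ∀ t, 0 ≤ G t := fun t =>
    setIntegral_nonneg measurableSet_Ioi fun u _ => hg_nonneg u
  have hG_le : ∀ t, G t ≤ ∫ u, g u := fun t =>
    setIntegral_le_integral hg_int (Eventually.of_forall hg_nonneg)
  have hG_anti : Antitone G := by
    intro a b hab
    exact setIntegral_mono_set hg_int.integrableOn
      (Eventually.of_forall hg_nonneg) (HasSubset.Subset.eventuallyLE (Ioi_subset_Ioi hab))
  have hG_meas : Measurable G := hG_anti.measurable
  -- the product integrability and Fubini
  have hprod : Integrable (fun p : ℝ × ℝ => g p.2 * g (p.1 - p.2))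
      ((volume.restrict (Ioi x₀)).prod volume) := by
    have h1 : Integrable (fun p : ℝ × ℝ => g p.2 * g (p.1 - p.2))
        ((volume : Measure ℝ).prod volume) := by
      have := hg_int.convolution_integrand (ContinuousLinearMap.mul ℝ ℝ) hg_int
      simpa using this
    have h2 : (volume.restrict (Ioi x₀)).prod (volume : Measure ℝ)
        = ((volume : Measure ℝ).prod volume).restrict (Ioi x₀ ×ˢ univ) := by
      rw [← Measure.prod_restrict, Measure.restrict_univ]
    rw [h2]
    exact h1.restrict
  have hswap : (∫ x in Ioi x₀, ∫ y, g y * g (x - y))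
      = ∫ y, ∫ x in Ioi x₀, g y * g (x - y) :=
    integral_integral_swap hprod
  -- inner translation
  have htrans : ∀ y : ℝ, (∫ x in Ioi x₀, g (x - y)) = G (x₀ - y) := by
    intro y
    have e1 : (Ioi x₀).indicator (fun x => g (x - y))
        = fun x => (Ioi (x₀ - y)).indicator g (x - y) := by
      funext x
      by_cases hx : x ∈ Ioi x₀
      · rw [indicator_of_mem hx, indicator_of_mem (by simpa [mem_Ioi] using sub_lt_sub_right hx y)]
      · rw [indicator_of_notMem hx, indicator_of_notMem]
        simp only [mem_Ioi, not_lt] at hx ⊢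
        exact sub_le_sub_right hx y
    rw [← integral_indicator measurableSet_Ioi, e1,
      integral_sub_right_eq_self ((Ioi (x₀ - y)).indicator g) y,
      integral_indicator measurableSet_Ioi]
  -- identify LHS with the g-double integral
  have hFx : ∀ x ∈ Ioi x₀, (∫ y in Ioo (0:ℝ) x, h y * h (x - y)) = ∫ y, g y * g (x - y) := by
    intro x hx
    rw [mem_Ioi] at hx
    have e1 : (∫ y in Ioo (0:ℝ) x, h y * h (x - y)) = ∫ y in Ioo (0:ℝ) x, g y * g (x - y) := by
      apply setIntegral_congr_ae measurableSet_Ioo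
      filter_upwards [hae, hmap x] with y h1 h2 hy
      rw [h1 (mem_Ioi.2 hy.1), h2 (mem_Ioi.2 (sub_pos.2 hy.2))]
    rw [e1]
    apply setIntegral_eq_integral_of_forall_compl_eq_zero
    intro y hy
    simp only [mem_Ioo, not_and_or, not_lt] at hy
    rcases hy with hy | hy
    · rw [hg_zero y (by simpa [mem_Ioi, not_lt] using hy), zero_mul]
    · rw [hg_zero (x - y) (by simp only [mem_Ioi, not_lt]; exact sub_nonpos.2 hy), mul_zero]
  have hL : (∫ x in Ioi x₀, ∫ y in Ioo (0:ℝ) x, h y * h (x - y))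
      = ∫ y, g y * G (x₀ - y) := by
    rw [setIntegral_congr_fun measurableSet_Ioi hFx, hswap]
    congr 1
    funext y
    rw [integral_const_mul, htrans y]
  rw [hL]
  -- restrict to Ioi 0
  have hk_zero : ∀ y, y ∉ Ioi (0:ℝ) → g y * G (x₀ - y) = 0 := fun y hy => by
    rw [hg_zero y hy, zero_mul]
  rw [← setIntegral_eq_integral_of_forall_compl_eq_zero hk_zero]
  -- integrability of the integrand
  have hk_int : Integrable (fun y => g y * G (x₀ - y)) := by
    have : Integrable (fun y => G (x₀ - y) * g y) := by
      apply hg_int.bdd_mul ((hG_meas.comp (measurable_const.sub measurable_id)).aestronglyMeasurable)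
      exact (Eventually.of_forall (fun y => by
        simpa [Real.norm_eq_abs, abs_of_nonneg (hG_nonneg (x₀ - y))] using hG_le (x₀ - y)) :
          ∀ᵐ y ∂(volume : Measure ℝ), ‖G (x₀ - y)‖ ≤ ∫ u, g u)
    exact this.congr (Eventually.of_forall fun y => mul_comm _ _)
  -- split the domain
  rw [← Ioo_union_Ici_eq_Ioi hx₀,
    setIntegral_union ((Iio_disjoint_Ici le_rfl).mono_left Ioo_subset_Iio_self) measurableSet_Ici
      hk_int.integrableOn hk_int.integrableOn]
  have p1 : (∫ y in Ioo (0:ℝ) x₀, g y * G (x₀ - y))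
      = ∫ y in Ioo (0:ℝ) x₀, h y * H (x₀ - y) := by
    apply setIntegral_congr_ae measurableSet_Ioo
    filter_upwards [hae] with y h1 hy
    rw [h1 (mem_Ioi.2 hy.1), hGH (x₀ - y) (sub_pos.2 hy.2)]
  have p2 : (∫ y in Ici x₀, g y * G (x₀ - y)) = (∫ x in Ioi (0:ℝ), h x) * H x₀ := by
    have e : EqOn (fun y => g y * G (x₀ - y))
        (fun y => g y * ∫ x in Ioi (0:ℝ), h x) (Ici x₀) := by
      intro y hy
      simp only
      rw [hG0 (x₀ - y) (sub_nonpos.2 hy), hC]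
    rw [setIntegral_congr_fun measurableSet_Ici e, integral_mul_const,
      integral_Ici_eq_integral_Ioi]
    have e2 : (∫ y in Ioi x₀, g y) = H x₀ := by
      rw [hH]
      exact integral_congr_ae
        (ae_restrict_of_ae_restrict_of_subset (Ioi_subset_Ioi hx₀.le) hg_eqh)
    rw [e2, mul_comm]
  rw [p1, p2, Ioo_union_Ici_eq_Ioi hx₀]
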